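/- arXiv:2201.02371 — 3 statements merged into one kernel-verified Lean document; each statement's English description precedes it below -/
import Mathlib

section
/- For the Beam-Warming amplification factor F(θ) = 1 − 2λ² sin²(θ/2) − 4λ(1−λ) sin⁴(θ/2) + i λ sin θ (1 + 2(1−λ) sin²(θ/2)), one has |F(θ)|² = 1 − 4λ(1−λ)²(2−λ) sin⁴(θ/2) for all real θ. -/
/-- The Beam-Warming amplification factor satisfies
`|F(θ)|² = 1 − 4λ(1−λ)²(2−λ) sin⁴(θ/2)`. -/
theorem beam_warming_amplification_modulus (lam θ : ℝ) :
    (norm (1 - 2 * (lam : ℂ) ^ 2 * (Real.sin (θ / 2) : ℂ) ^ 2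
        - 4 * (lam : ℂ) * (1 - (lam : ℂ)) * (Real.sin (θ / 2) : ℂ) ^ 4
        + Complex.I * (lam : ℂ) * (Real.sin θ : ℂ)
            * (1 + 2 * (1 - (lam : ℂ)) * (Real.sin (θ / 2) : ℂ) ^ 2))) ^ 2
      = 1 - 4 * lam * (1 - lam) ^ 2 * (2 - lam) * (Real.sin (θ / 2)) ^ 4 := by
  set s := Real.sin (θ / 2) with hs
  set c := Real.cos (θ / 2) with hc
  have hsin : Real.sin θ = 2 * s * c := by
    rw [hs, hc, ← Real.sin_two_mul]; ring_nf
  have hsc : s ^ 2 + c ^ 2 = 1 := Real.sin_sq_add_cos_sq _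
  have hkey : (1 - 2 * (lam : ℂ) ^ 2 * (s : ℂ) ^ 2
        - 4 * (lam : ℂ) * (1 - (lam : ℂ)) * (s : ℂ) ^ 4
        + Complex.I * (lam : ℂ) * (Real.sin θ : ℂ)
            * (1 + 2 * (1 - (lam : ℂ)) * (s : ℂ) ^ 2))
      = Complex.ofReal (1 - 2 * lam ^ 2 * s ^ 2 - 4 * lam * (1 - lam) * s ^ 4)
        + Complex.ofReal (lam * (2 * s * c) * (1 + 2 * (1 - lam) * s ^ 2)) * Complex.I := by
    rw [hsin]; push_cast; ring
  rw [hkey, Complex.sq_norm, Complex.normSq_add_mul_I]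
  have hc2 : c ^ 2 = 1 - s ^ 2 := by linarith
  linear_combination (4 * lam ^ 2 * s ^ 2 * (1 + 2 * (1 - lam) * s ^ 2) ^ 2) * hc2
end

section
/- If λ ∈ (0,1) ∪ (1,2), then for every θ ∈ [−π, π] with θ ≠ 0, the Beam-Warming amplification factor F(θ) = 1 − 2λ² sin²(θ/2) − 4λ(1−λ) sin⁴(θ/2) + i λ sin θ (1 + 2(1−λ) sin²(θ/2)) satisfies |F(θ)| < 1, and F(0) = 1. -/
/-- For `λ ∈ (0,1) ∪ (1,2)`, the Beam-Warming amplification factor satisfies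
`|F(θ)| < 1` for every `θ ∈ [−π, π]` with `θ ≠ 0`, and `F(0) = 1`. -/
theorem beam_warming_dissipation (lam : ℝ)
    (hlam : lam ∈ Set.Ioo (0 : ℝ) 1 ∪ Set.Ioo (1 : ℝ) 2)
    (F : ℝ → ℂ)
    (hF : ∀ θ : ℝ, F θ = 1 - 2 * (lam : ℂ) ^ 2 * (Real.sin (θ / 2) : ℂ) ^ 2
        - 4 * (lam : ℂ) * (1 - (lam : ℂ)) * (Real.sin (θ / 2) : ℂ) ^ 4
        + Complex.I * (lam : ℂ) * (Real.sin θ : ℂ)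
            * (1 + 2 * (1 - (lam : ℂ)) * (Real.sin (θ / 2) : ℂ) ^ 2)) :
    (∀ θ ∈ Set.Icc (-Real.pi) Real.pi, θ ≠ 0 → ‖F θ‖ < 1) ∧ F 0 = 1 := by
  have hpi := Real.pi_pos
  constructor
  · intro θ hθ hθ0
    have hFθ : F θ = ((1 - 2 * lam ^ 2 * (Real.sin (θ / 2)) ^ 2
        - 4 * lam * (1 - lam) * (Real.sin (θ / 2)) ^ 4 : ℝ) : ℂ)
        + ((lam * Real.sin θ * (1 + 2 * (1 - lam) * (Real.sin (θ / 2)) ^ 2) : ℝ) : ℂ)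
          * Complex.I := by
      rw [hF]; push_cast; ring
    set s := Real.sin (θ / 2) with hs_def
    set c := Real.cos (θ / 2) with hc_def
    have hsin : Real.sin θ = 2 * s * c := by
      rw [hs_def, hc_def, ← Real.sin_two_mul]
      ring_nf
    have hc2 : c ^ 2 = 1 - s ^ 2 := by
      have := Real.sin_sq_add_cos_sq (θ / 2)
      nlinarith
    have hs0 : s ≠ 0 := by
      intro h
      have h1 : -Real.pi < θ / 2 := by
        have := hθ.1; linarith
      have h2 : θ / 2 < Real.pi := by
        have := hθ.2; linarith
      have := (Real.sin_eq_zero_iff_of_lt_of_lt h1 h2).mp h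
      exact hθ0 (by linarith)
    have habs2 : (‖F θ‖) ^ 2
        = 1 - 4 * lam * (1 - lam) ^ 2 * (2 - lam) * s ^ 4 := by
      rw [Complex.sq_norm, hFθ, Complex.normSq_add_mul_I, hsin]
      linear_combination (4 * lam ^ 2 * s ^ 2 * (1 + 2 * (1 - lam) * s ^ 2) ^ 2) * hc2
    have hκ : 0 < 4 * lam * (1 - lam) ^ 2 * (2 - lam) * s ^ 4 := by
      have hs4 : 0 < s ^ 4 := by positivity
      have hp : 0 < lam ∧ 0 < (1 - lam) ^ 2 ∧ 0 < 2 - lam := by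
        rcases hlam with ⟨h1, h2⟩ | ⟨h1, h2⟩
        · exact ⟨h1, by nlinarith, by linarith⟩
        · exact ⟨by linarith, by nlinarith [mul_pos (sub_pos.mpr h1) (sub_pos.mpr h1)], by linarith⟩
      obtain ⟨p1, p2, p3⟩ := hp
      have := mul_pos (mul_pos (mul_pos (by linarith : (0:ℝ) < 4 * lam) p2) p3) hs4
      linarith [this]
    nlinarith [norm_nonneg (F θ)]
  · rw [hF]
    norm_num
end

section
/- Let F ∈ L¹(ℝ;ℂ). Then lim_{n→∞} ∫_ℝ F(x) |cos(n^{1/4} x − π/4)| dx = (2/π) ∫_ℝ F(x) dx. -/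
open MeasureTheory Real Filter Complex Topology AddCircle
open scoped FourierTransform

private lemma abs_cos_periodic' : Function.Periodic (fun x : ℝ => ((|Real.cos x| : ℝ) : ℂ)) π := by
  intro x
  simp [Real.cos_antiperiodic x, abs_neg]

/-- `|cos|` as a continuous function on `AddCircle π`, valued in `ℂ`. -/
private noncomputable def gC' : C(AddCircle π, ℂ) :=
  ⟨abs_cos_periodic'.lift, continuous_coinduced_dom.mpr
    (show Continuous (fun x : ℝ => ((|Real.cos x| : ℝ) : ℂ)) by continuity)⟩

private lemma gC'_coe (x : ℝ) : gC' (x : AddCircle π) = ((|Real.cos x| : ℝ) : ℂ) := rfl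

private lemma integral_abs_cos' : ∫ x in (0:ℝ)..π, |Real.cos x| = 2 := by
  rw [← intervalIntegral.integral_add_adjacent_intervals (b := π/2)
    (by apply IntervalIntegrable.abs; exact Real.continuous_cos.intervalIntegrable _ _)
    (by apply IntervalIntegrable.abs; exact Real.continuous_cos.intervalIntegrable _ _)]
  have h1 : ∫ x in (0:ℝ)..π/2, |Real.cos x| = 1 := by
    rw [intervalIntegral.integral_congr (g := Real.cos)]
    · simp
    · intro x hx
      rw [Set.uIcc_of_le (by positivity)] at hx
      exact abs_of_nonneg (Real.cos_nonneg_of_mem_Icc ⟨by linarith [hx.1, Real.pi_pos], hx.2⟩)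
  have h2 : ∫ x in (π/2:ℝ)..π, |Real.cos x| = 1 := by
    rw [intervalIntegral.integral_congr (g := fun x => -Real.cos x)]
    · simp [Real.sin_pi_div_two]
    · intro x hx
      rw [Set.uIcc_of_le (by linarith [Real.pi_pos])] at hx
      exact abs_of_nonpos
        (Real.cos_nonpos_of_pi_div_two_le_of_le hx.1 (by linarith [hx.2, Real.pi_pos]))
  rw [h1, h2]; norm_num

private instance fact_pi_pos : Fact (0 < π) := ⟨Real.pi_pos⟩

private lemma mean_gC' : ∫ z, gC' z ∂(haarAddCircle) = ((2/π : ℝ) : ℂ) := by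
  have h := fourierCoeff_eq_intervalIntegral (T := π) gC' 0 0
  simp only [fourierCoeff, neg_zero, fourier_zero, one_smul, zero_add] at h
  rw [h]
  have : ∫ x in (0:ℝ)..π, gC' (x : AddCircle π) = ((2:ℝ) : ℂ) := by
    simp_rw [gC'_coe]
    rw [intervalIntegral.integral_ofReal, integral_abs_cos']
  rw [this, real_smul]
  push_cast
  ring

private lemma mean_fourier' (k : ℤ) (hk : k ≠ 0) :
    ∫ z, fourier k z ∂(haarAddCircle (T := π)) = 0 :=
  integral_eq_zero_of_add_right_eq_neg (μ := haarAddCircle)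
    (fourier_add_half_inv_index hk Real.pi_pos)

private lemma tende' : Filter.Tendsto (fun n : ℕ => (n:ℝ)^((1:ℝ)/4)) atTop atTop :=
  (tendsto_rpow_atTop (by norm_num)).comp tendsto_natCast_atTop_atTop

/-- the sampled point on the circle -/
private noncomputable def θ' (n : ℕ) (x : ℝ) : AddCircle π :=
  (((n:ℝ)^((1:ℝ)/4) * x - π/4 : ℝ) : AddCircle π)

private lemma RL' (F : ℝ → ℂ) (k : ℤ) (hk : k ≠ 0) :
    Tendsto (fun n : ℕ => ∫ x : ℝ, F x * fourier k (θ' n x)) atTop (𝓝 0) := by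
  have hw : Tendsto (fun n : ℕ => -((k:ℝ) * (n:ℝ)^((1:ℝ)/4)) / π) atTop (cocompact ℝ) := by
    rw [cocompact_eq_atBot_atTop]
    rcases lt_or_gt_of_ne (Int.cast_ne_zero.mpr hk : (k:ℝ) ≠ 0) with h | h
    · apply Tendsto.mono_right _ le_sup_right
      have : Tendsto (fun n : ℕ => (n:ℝ)^((1:ℝ)/4) * (-(k:ℝ)/π)) atTop atTop :=
        Tendsto.atTop_mul_const (div_pos (by linarith) Real.pi_pos) tende'
      exact this.congr (fun n => by ring)
    · apply Tendsto.mono_right _ le_sup_left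
      have : Tendsto (fun n : ℕ => (n:ℝ)^((1:ℝ)/4) * (-(k:ℝ)/π)) atTop atBot :=
        Tendsto.atTop_mul_const_of_neg (div_neg_of_neg_of_pos (by linarith) Real.pi_pos) tende'
      exact this.congr (fun n => by ring)
  have h0 := (Real.tendsto_integral_exp_smul_cocompact F).comp hw
  set C : ℂ := Complex.exp (-(π * Complex.I * k) / 2) with hC
  have key : ∀ n : ℕ, ∫ x : ℝ, F x * fourier k (θ' n x)
      = C * ∫ x : ℝ, 𝐞 (-(x * (-((k:ℝ) * (n:ℝ)^((1:ℝ)/4)) / π))) • F x := by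
    intro n
    rw [← integral_const_mul]
    congr 1; ext x
    rw [θ', fourier_coe_apply, Circle.smul_def, Real.fourierChar_apply]
    rw [show ((n:ℝ)^((1:ℝ)/4) * x - π/4 : ℝ) = ((n:ℝ)^((1:ℝ)/4) * x) + (-(π/4)) by ring]
    have hπ : (π:ℂ) ≠ 0 := by exact_mod_cast Real.pi_ne_zero
    rw [show (2 * ↑π * Complex.I * ↑k * ↑((n:ℝ)^((1:ℝ)/4) * x + -(π / 4)) / ↑π : ℂ)
        = 2 * ↑π * Complex.I * ↑k * ↑((n:ℝ)^((1:ℝ)/4) * x) / ↑π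
          + -(↑π * Complex.I * ↑k) / 2 by push_cast; field_simp; ring]
    rw [Complex.exp_add]
    rw [show (↑(2 * π * -(x * (-((k:ℝ) * (n:ℝ)^((1:ℝ)/4)) / π))) * Complex.I : ℂ)
        = 2 * ↑π * Complex.I * ↑k * ↑((n:ℝ)^((1:ℝ)/4) * x) / ↑π by push_cast; field_simp]
    rw [smul_eq_mul]
    ring
  simp_rw [key]
  have := h0.const_mul C
  simpa using this

/-- For `F ∈ L¹(ℝ;ℂ)`,
`lim_{n→∞} ∫ F(x) |cos(n^{1/4} x − π/4)| dx = (2/π) ∫ F(x) dx`. -/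
theorem tendsto_integral_abs_cos (F : ℝ → ℂ) (hF : Integrable F) :
    Filter.Tendsto
      (fun n : ℕ => ∫ x : ℝ,
        F x * (|Real.cos ((n : ℝ) ^ ((1 : ℝ) / 4) * x - Real.pi / 4)| : ℝ))
      Filter.atTop (nhds ((2 / Real.pi : ℝ) * ∫ x : ℝ, F x)) := by
  have hθcont : ∀ n : ℕ, Continuous (θ' n) := by
    intro n
    exact (AddCircle.continuous_mk' π).comp (by continuity)
  -- integrability of F times any continuous function of θ' n x
  have hint : ∀ (n : ℕ) (Q : C(AddCircle π, ℂ)),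
      Integrable (fun x : ℝ => F x * Q (θ' n x)) := by
    intro n Q
    have : Integrable (fun x : ℝ => Q (θ' n x) * F x) :=
      hF.bdd_mul (c := ‖Q‖) ((Q.continuous.comp (hθcont n)).aestronglyMeasurable)
        (Filter.Eventually.of_forall fun x => Q.norm_coe_le_norm _)
    exact this.congr (Filter.Eventually.of_forall fun x => mul_comm _ _)
  rw [Metric.tendsto_atTop]
  intro ε hε
  set A : ℝ := ∫ x : ℝ, ‖F x‖ with hA
  have hA0 : 0 ≤ A := integral_nonneg (fun x => norm_nonneg _)
  set ε' : ℝ := ε / (2 * (2*A + 1)) with hε'def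
  have hε' : 0 < ε' := by positivity
  -- get the trigonometric polynomial P
  have h1 : gC' ∈ closure ((Submodule.span ℂ (Set.range (@fourier π))) : Set C(AddCircle π, ℂ)) := by
    rw [← Submodule.topologicalClosure_coe, span_fourier_closure_eq_top]
    trivial
  obtain ⟨P, hPmem, hPdist⟩ := Metric.mem_closure_iff.mp h1 ε' hε'
  obtain ⟨c, hc⟩ := Finsupp.mem_span_range_iff_exists_finsupp.mp hPmem
  have hPpt : ∀ z, ‖gC' z - P z‖ ≤ ε' := by
    intro z
    calc ‖gC' z - P z‖ = dist (gC' z) (P z) := (dist_eq_norm _ _).symm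
    _ ≤ dist gC' P := ContinuousMap.dist_apply_le_dist z
    _ ≤ ε' := hPdist.le
  have hPapp : ∀ z, P z = ∑ k ∈ c.support, c k • fourier k z := by
    intro z
    rw [← hc]
    rw [Finsupp.sum]
    simp
  -- the mean of P is c 0
  have hintQ : ∀ Q : C(AddCircle π, ℂ), Integrable (fun z => Q z) (haarAddCircle) :=
    fun Q => Q.continuous.integrable_of_hasCompactSupport (HasCompactSupport.of_compactSpace _)
  have hmeanP : ∫ z, P z ∂(haarAddCircle) = c 0 := by
    simp_rw [hPapp]
    rw [integral_finset_sum (s := c.support) (f := fun k z => c k • fourier k z)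
      (fun k _ => by simpa [Pi.smul_def] using (hintQ (fourier k)).smul (c k))]
    have : ∀ k ∈ c.support, c k • ∫ z, fourier k z ∂(haarAddCircle (T := π))
        = if k = 0 then c 0 else 0 := by
      intro k _
      by_cases hk : k = 0
      · subst hk
        simp only [if_pos]
        have : ∀ z : AddCircle π, fourier 0 z = (1 : ℂ) := fun z => fourier_zero
        simp_rw [this]
        simp
      · rw [mean_fourier' k hk]
        simp [hk]
    rw [Finset.sum_congr rfl (fun k hk => by rw [integral_smul, this k hk])]
    rw [Finset.sum_ite_eq' c.support 0 (fun _ => c 0)]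
    by_cases h0 : (0:ℤ) ∈ c.support
    · rw [if_pos h0]
    · rw [if_neg h0, Finsupp.notMem_support_iff.mp h0]
  -- |c 0 - 2/π| ≤ ε'
  have hc0 : ‖c 0 - ((2/π : ℝ) : ℂ)‖ ≤ ε' := by
    rw [← hmeanP, ← mean_gC', ← integral_sub (hintQ P) (hintQ gC')]
    have := norm_integral_le_of_norm_le_const
      (μ := haarAddCircle (T := π)) (C := ε')
      (f := fun z => P z - gC' z) (Filter.Eventually.of_forall fun z => by
        rw [norm_sub_rev]; exact hPpt z)
    simpa using this
  -- middle term tendsto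
  have hMid : Tendsto (fun n : ℕ => ∫ x : ℝ, F x * P (θ' n x)) atTop (𝓝 (c 0 * ∫ x : ℝ, F x)) := by
    have hrew : ∀ n : ℕ, ∫ x : ℝ, F x * P (θ' n x)
        = ∑ k ∈ c.support, c k * ∫ x : ℝ, F x * fourier k (θ' n x) := by
      intro n
      simp_rw [hPapp, Finset.mul_sum]
      rw [integral_finset_sum _ (fun k _ => by
        have := hint n (c k • fourier k)
        simpa using this)]
      refine Finset.sum_congr rfl fun k _ => ?_
      rw [← integral_const_mul]
      congr 1; ext x
      rw [smul_eq_mul]; ring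
    simp_rw [hrew]
    have hlim : c 0 * ∫ x : ℝ, F x
        = ∑ k ∈ c.support, (if k = 0 then c 0 * ∫ x : ℝ, F x else 0) := by
      rw [Finset.sum_ite_eq' c.support 0 (fun _ => c 0 * ∫ x : ℝ, F x)]
      by_cases h0 : (0:ℤ) ∈ c.support
      · rw [if_pos h0]
      · rw [if_neg h0]
        rw [Finsupp.notMem_support_iff.mp h0]
        ring
    rw [hlim]
    apply tendsto_finset_sum
    intro k _
    by_cases hk : k = 0
    · subst hk
      simp only [if_pos]
      have : ∀ n : ℕ, c 0 * ∫ x : ℝ, F x * fourier 0 (θ' n x) = c 0 * ∫ x : ℝ, F x := by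
        intro n
        congr 1
        refine integral_congr_ae (Filter.Eventually.of_forall fun x => ?_)
        simp [fourier_zero]
      simp_rw [this]
      exact tendsto_const_nhds
    · rw [if_neg hk]
      have := (RL' F k hk).const_mul (c k)
      simpa using this
  -- now the final estimate
  have hMid2 := Metric.tendsto_atTop.mp hMid (ε/2) (by positivity)
  obtain ⟨N, hN⟩ := hMid2
  refine ⟨N, fun n hn => ?_⟩
  have hNn := hN n hn
  -- rewrite the integrand via gC'
  have hIeq : (∫ x : ℝ, F x * (|Real.cos ((n : ℝ) ^ ((1 : ℝ) / 4) * x - Real.pi / 4)| : ℝ))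
      = ∫ x : ℝ, F x * gC' (θ' n x) := by
    rfl
  rw [dist_eq_norm, hIeq]
  have hT1 : ‖∫ x : ℝ, F x * (gC' (θ' n x) - P (θ' n x))‖ ≤ ε' * A := by
    have hb : ∀ x : ℝ, ‖F x * (gC' (θ' n x) - P (θ' n x))‖ ≤ ε' * ‖F x‖ := by
      intro x
      rw [norm_mul, mul_comm (ε' : ℝ) _]
      exact mul_le_mul_of_nonneg_left (hPpt _) (norm_nonneg _)
    calc ‖∫ x : ℝ, F x * (gC' (θ' n x) - P (θ' n x))‖
        ≤ ∫ x : ℝ, ε' * ‖F x‖ :=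
          norm_integral_le_of_norm_le ((integrable_norm_iff hF.1).mpr hF |>.const_mul ε')
            (Filter.Eventually.of_forall hb)
      _ = ε' * A := by rw [integral_const_mul]
  have hT3 : ‖(c 0 - ((2/π : ℝ) : ℂ)) * ∫ x : ℝ, F x‖ ≤ ε' * A := by
    rw [norm_mul]
    exact mul_le_mul hc0 (norm_integral_le_integral_norm F) (norm_nonneg _) hε'.le
  have hsplit : (∫ x : ℝ, F x * gC' (θ' n x)) - ((2 / Real.pi : ℝ) : ℂ) * ∫ x : ℝ, F x
      = (∫ x : ℝ, F x * (gC' (θ' n x) - P (θ' n x)))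
        + ((∫ x : ℝ, F x * P (θ' n x)) - c 0 * ∫ x : ℝ, F x)
        + ((c 0 - ((2/π : ℝ) : ℂ)) * ∫ x : ℝ, F x) := by
    have e1 : (∫ x : ℝ, F x * (gC' (θ' n x) - P (θ' n x)))
        = (∫ x : ℝ, F x * gC' (θ' n x)) - ∫ x : ℝ, F x * P (θ' n x) := by
      rw [← integral_sub (hint n gC') (hint n P)]
      refine integral_congr_ae (Filter.Eventually.of_forall fun x => ?_)
      ring
    rw [e1]
    ring
  rw [hsplit]
  rw [dist_eq_norm] at hNn
  have hε'eq : ε' * (2*(2*A + 1)) = ε := by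
    rw [hε'def]; field_simp
  calc ‖(∫ x : ℝ, F x * (gC' (θ' n x) - P (θ' n x)))
        + ((∫ x : ℝ, F x * P (θ' n x)) - c 0 * ∫ x : ℝ, F x)
        + ((c 0 - ((2/π : ℝ) : ℂ)) * ∫ x : ℝ, F x)‖
      ≤ ‖(∫ x : ℝ, F x * (gC' (θ' n x) - P (θ' n x)))
          + ((∫ x : ℝ, F x * P (θ' n x)) - c 0 * ∫ x : ℝ, F x)‖
        + ‖(c 0 - ((2/π : ℝ) : ℂ)) * ∫ x : ℝ, F x‖ := norm_add_le _ _
    _ ≤ ‖(∫ x : ℝ, F x * (gC' (θ' n x) - P (θ' n x)))‖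
        + ‖((∫ x : ℝ, F x * P (θ' n x)) - c 0 * ∫ x : ℝ, F x)‖
        + ‖(c 0 - ((2/π : ℝ) : ℂ)) * ∫ x : ℝ, F x‖ := by
          gcongr
          exact norm_add_le _ _
    _ < ε' * A + ε/2 + ε' * A := by
          apply add_lt_add_of_lt_of_le _ hT3
          apply add_lt_add_of_le_of_lt hT1 hNn
    _ ≤ ε := by nlinarith [hε', hA0]
end
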